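/- Let V be a finite-dimensional real normed space. (a) If w ∈ V and r ≥ 0 satisfy |σ_v(w)| ≤ r for every smooth point v of the unit sphere of V, then ‖w‖ ≤ r. (b) The closed convex hull of the set {σ_v : v a smooth point of the unit sphere of V} is the closed unit ball of the dual space V′ for the dual norm. -/

import Mathlib

/-- `σ` is the support functional of the smooth point `v` of the unit sphere of `V`:
`‖v‖ = 1` and `σ` is the unique norm-one functional with `σ(v) = 1`. -/
def IsSupportFunctionalOfSmoothPoint {V : Type*} [NormedAddCommGroup V]
    [NormedSpace ℝ V] (v : V) (σ : V →L[ℝ] ℝ) : Prop :=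
  ‖v‖ = 1 ∧ ‖σ‖ = 1 ∧ σ v = 1 ∧ ∀ τ : V →L[ℝ] ℝ, ‖τ‖ = 1 → τ v = 1 → τ = σ

open Filter Topology Set Module

/-- Uniqueness of the support functional at a point of differentiability of the norm. -/
lemma aux_support_unique {V : Type*} [NormedAddCommGroup V] [NormedSpace ℝ V]
    {v : V} {f τ : V →L[ℝ] ℝ} (hf : HasFDerivAt (‖·‖) f v)
    (hv : ‖v‖ = 1) (hτ : ‖τ‖ = 1) (hτv : τ v = 1) : τ = f := by
  ext x
  set g : ℝ → ℝ := fun t => ‖v + t • x‖ with hgdef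
  have hg : HasDerivAt g (f x) 0 := by
    have hc : HasDerivAt (fun t : ℝ => v + t • x) x 0 := by
      simpa using ((hasDerivAt_id (0 : ℝ)).smul_const x).const_add v
    have hf' : HasFDerivAt (‖·‖) f ((fun t : ℝ => v + t • x) 0) := by simpa using hf
    exact hf'.comp_hasDerivAt 0 hc
  have hg0 : g 0 = 1 := by simp [hgdef, hv]
  have key : ∀ t : ℝ, 1 + t * τ x ≤ g t := by
    intro t
    have h1 : τ (v + t • x) ≤ ‖τ‖ * ‖v + t • x‖ := le_trans (le_abs_self _)
      (ContinuousLinearMap.le_opNorm τ _)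
    have h2 : τ (v + t • x) = 1 + t * τ x := by
      simp [map_add, hτv, map_smul, smul_eq_mul]
    rw [h2, hτ, one_mul] at h1
    exact h1
  have hslope := hasDerivAt_iff_tendsto_slope.mp hg
  have hle : τ x ≤ f x := by
    have h1 : Tendsto (slope g 0) (𝓝[>] (0 : ℝ)) (𝓝 (f x)) :=
      hslope.mono_left (nhdsWithin_mono 0 (fun t ht => ne_of_gt ht))
    refine ge_of_tendsto h1 (Filter.eventually_of_mem self_mem_nhdsWithin fun t ht => ?_)
    have ht' : (0 : ℝ) < t := ht
    rw [slope_def_field, hg0, sub_zero, le_div_iff₀ ht']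
    have := key t
    nlinarith
  have hge : f x ≤ τ x := by
    have h1 : Tendsto (slope g 0) (𝓝[<] (0 : ℝ)) (𝓝 (f x)) :=
      hslope.mono_left (nhdsWithin_mono 0 (fun t ht => ne_of_lt ht))
    refine le_of_tendsto h1 (Filter.eventually_of_mem self_mem_nhdsWithin fun t ht => ?_)
    have ht' : t < (0 : ℝ) := ht
    rw [slope_def_field, hg0, sub_zero, div_le_iff_of_neg ht']
    have := key t
    nlinarith
  linarith

/-- At a nonzero point of differentiability of the norm, the derivative is the support
functional of the corresponding smooth point of the unit sphere. -/
lemma aux_isSupport_of_diff {V : Type*} [NormedAddCommGroup V] [NormedSpace ℝ V]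
    {u : V} (hu : u ≠ 0) (hd : DifferentiableAt ℝ (‖·‖) u) :
    IsSupportFunctionalOfSmoothPoint (‖u‖⁻¹ • u) (fderiv ℝ (‖·‖) u) := by
  have : Nontrivial V := nontrivial_of_ne u 0 hu
  have hnu : (0 : ℝ) < ‖u‖ := norm_pos_iff.mpr hu
  set f := fderiv ℝ (‖·‖) u with hfdef
  set v := ‖u‖⁻¹ • u with hvdef
  have hv : ‖v‖ = 1 := by
    rw [hvdef, norm_smul, norm_inv, norm_norm, inv_mul_cancel₀ hnu.ne']
  have hfv : HasFDerivAt (‖·‖) f v :=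
    hd.hasFDerivAt.hasFDerivAt_norm_smul_pos (inv_pos.mpr hnu)
  have hdv : DifferentiableAt ℝ (‖·‖) v := hfv.differentiableAt
  have hfv_eq : fderiv ℝ (‖·‖) v = f := hfv.fderiv
  have hfvv : f v = 1 := by
    have := hdv.fderiv_norm_self
    rw [hfv_eq, hv] at this
    exact this
  have hnf : ‖f‖ = 1 := by
    have := norm_fderiv_norm (x := v) hdv
    rwa [hfv_eq] at this
  exact ⟨hv, hnf, hfvv, fun τ hτ hτv => aux_support_unique hfv hv hτ hτv⟩

/-- Part (a). -/
lemma aux_part_a {V : Type*} [NormedAddCommGroup V] [NormedSpace ℝ V]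
    [FiniteDimensional ℝ V] [Nontrivial V] (w : V) (r : ℝ) (hr : 0 ≤ r)
    (h : ∀ (v : V) (σ : V →L[ℝ] ℝ), IsSupportFunctionalOfSmoothPoint v σ → |σ w| ≤ r) :
    ‖w‖ ≤ r := by
  refine le_of_forall_pos_le_add fun ε hε => ?_
  obtain ⟨u, hu, hdist⟩ := dense_differentiableAt_norm.exists_dist_lt w (half_pos hε)
  have hune : u ≠ 0 := by
    rintro rfl
    exact not_differentiableAt_norm_zero V hu
  have hsp := aux_isSupport_of_diff hune hu
  have hbound := h _ _ hsp
  set f := fderiv ℝ (‖·‖) u with hfdef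
  have hfu : f u = ‖u‖ := hu.fderiv_norm_self
  have hnf : ‖f‖ = 1 := norm_fderiv_norm hu
  have hdiff : |f u - f w| ≤ ‖u - w‖ := by
    have : f u - f w = f (u - w) := by rw [map_sub]
    rw [this]
    calc |f (u - w)| ≤ ‖f‖ * ‖u - w‖ := ContinuousLinearMap.le_opNorm f _
      _ = ‖u - w‖ := by rw [hnf, one_mul]
  have hduw : ‖u - w‖ < ε / 2 := by rwa [dist_comm, dist_eq_norm] at hdist
  have h1 : ‖w‖ ≤ ‖u‖ + ε / 2 := by
    calc ‖w‖ ≤ ‖u‖ + ‖w - u‖ := norm_le_insert' w u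
      _ ≤ ‖u‖ + ε / 2 := by rw [norm_sub_rev] at hduw; linarith [hduw.le]
  have h2 : ‖u‖ ≤ r + ε / 2 := by
    calc ‖u‖ = f u := hfu.symm
      _ ≤ |f u| := le_abs_self _
      _ ≤ |f w| + |f u - f w| := by
          have := abs_sub_abs_le_abs_sub (f u) (f w)
          linarith
      _ ≤ r + ε / 2 := by linarith
  linarith

/-- The set of support functionals is symmetric. -/
lemma aux_symm {V : Type*} [NormedAddCommGroup V] [NormedSpace ℝ V]
    {v : V} {σ : V →L[ℝ] ℝ} (h : IsSupportFunctionalOfSmoothPoint v σ) :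
    IsSupportFunctionalOfSmoothPoint (-v) (-σ) := by
  obtain ⟨hv, hσ, hσv, huniq⟩ := h
  refine ⟨by simpa using hv, by simpa using hσ, by simp [hσv], fun τ hτ hτv => ?_⟩
  have : (-τ) v = 1 := by simp at hτv ⊢; linarith [hτv]
  have := huniq (-τ) (by simpa using hτ) (by simpa using hτv)
  simp [← this]

/-- The continuous dual of a finite-dimensional space has the same dimension. -/
lemma aux_finrank_dual (E : Type*) [NormedAddCommGroup E] [NormedSpace ℝ E]
    [FiniteDimensional ℝ E] : finrank ℝ (E →L[ℝ] ℝ) = finrank ℝ E := by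
  have e1 : finrank ℝ (E →L[ℝ] ℝ) = finrank ℝ (E →ₗ[ℝ] ℝ) :=
    (LinearMap.toContinuousLinearMap : (E →ₗ[ℝ] ℝ) ≃ₗ[ℝ] (E →L[ℝ] ℝ)).symm.finrank_eq
  rw [e1]
  exact Subspace.dual_finrank_eq

theorem stmt10 {V : Type*} [NormedAddCommGroup V] [NormedSpace ℝ V]
    [FiniteDimensional ℝ V] [Nontrivial V] :
    (∀ (w : V) (r : ℝ), 0 ≤ r →
      (∀ (v : V) (σ : V →L[ℝ] ℝ), IsSupportFunctionalOfSmoothPoint v σ → |σ w| ≤ r) →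
      ‖w‖ ≤ r) ∧
    closure (convexHull ℝ
        {σ : V →L[ℝ] ℝ | ∃ v : V, IsSupportFunctionalOfSmoothPoint v σ}) =
      Metric.closedBall (0 : V →L[ℝ] ℝ) 1 := by
  refine ⟨aux_part_a, ?_⟩
  set S : Set (V →L[ℝ] ℝ) := {σ | ∃ v : V, IsSupportFunctionalOfSmoothPoint v σ} with hSdef
  -- S is nonempty
  obtain ⟨x0, hx0⟩ := exists_ne (0 : V)
  have hx0' : (0 : ℝ) < ‖x0‖ := norm_pos_iff.mpr hx0
  obtain ⟨u0, hu0, hu0d⟩ := dense_differentiableAt_norm.exists_dist_lt x0 hx0'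
  have hu0ne : u0 ≠ 0 := by
    intro h
    rw [h, dist_zero_right] at hu0d
    exact absurd hu0d (lt_irrefl _)
  have hSne : (fderiv ℝ (‖·‖) u0) ∈ S := ⟨_, aux_isSupport_of_diff hu0ne hu0⟩
  -- forward inclusion
  have hSsub : S ⊆ Metric.closedBall 0 1 := by
    rintro σ ⟨v, _, hσ, _⟩
    rw [Metric.mem_closedBall, dist_zero_right, hσ]
  have hfwd : closure (convexHull ℝ S) ⊆ Metric.closedBall 0 1 :=
    closure_minimal (convexHull_min hSsub (convex_closedBall _ _)) Metric.isClosed_closedBall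
  refine Set.Subset.antisymm hfwd fun τ hτ => ?_
  rw [Metric.mem_closedBall, dist_zero_right] at hτ
  by_contra hτK
  obtain ⟨F, c, hF1, hF2⟩ :=
    geometric_hahn_banach_closed_point ((convex_convexHull ℝ S).closure) isClosed_closure hτK
  -- represent F as evaluation at some w : V
  have hinj : Function.Injective (NormedSpace.inclusionInDoubleDual ℝ V) :=
    (NormedSpace.inclusionInDoubleDualLi ℝ (E := V)).injective
  have efr2 : finrank ℝ (StrongDual ℝ (StrongDual ℝ V)) = finrank ℝ V := by
    show finrank ℝ ((V →L[ℝ] ℝ) →L[ℝ] ℝ) = finrank ℝ V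
    rw [aux_finrank_dual, aux_finrank_dual]
  have hsurj : Function.Surjective
      ((NormedSpace.inclusionInDoubleDual ℝ V : V →L[ℝ] _) : V →ₗ[ℝ] StrongDual ℝ (StrongDual ℝ V)) :=
    (LinearMap.injective_iff_surjective_of_finrank_eq_finrank efr2.symm).mp hinj
  obtain ⟨w, hw⟩ := hsurj F
  have hwF : ∀ σ : V →L[ℝ] ℝ, F σ = σ w := by
    intro σ
    rw [← hw]
    rfl
  -- every support functional satisfies |σ w| ≤ c
  have hbound : ∀ σ ∈ S, |σ w| ≤ c := by
    intro σ hσ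
    have h1 : σ w < c := by
      rw [← hwF]
      exact hF1 σ (subset_closure (subset_convexHull ℝ S hσ))
    have h2 : -(σ w) < c := by
      obtain ⟨v, hv⟩ := hσ
      have : (-σ) ∈ S := ⟨-v, aux_symm hv⟩
      have := hF1 (-σ) (subset_closure (subset_convexHull ℝ S this))
      rw [hwF] at this
      simpa using this
    exact abs_le.mpr ⟨by linarith, h1.le⟩
  have hc0 : 0 ≤ c := le_trans (abs_nonneg _) (hbound _ hSne)
  have hnw : ‖w‖ ≤ c := aux_part_a w c hc0 (fun v σ hσ => hbound σ ⟨v, hσ⟩)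
  have hτw : τ w ≤ ‖w‖ := by
    calc τ w ≤ |τ w| := le_abs_self _
      _ ≤ ‖τ‖ * ‖w‖ := ContinuousLinearMap.le_opNorm τ w
      _ ≤ 1 * ‖w‖ := by gcongr
      _ = ‖w‖ := one_mul _
  rw [hwF] at hF2
  linarith
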